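/- arXiv:math/0111214 — 3 statements merged into one kernel-verified Lean document; each statement's English description precedes it below -/
import Mathlib

section
/- Let x₁,…,xₙ be positive reals and Aᵢ = [[0,1],[-1,xᵢ]]. Suppose that for all 1 ≤ i ≤ k ≤ n, the product W = Aᵢ·Aᵢ₊₁···A_k = [[a,b],[c,d]] satisfies a ≤ 0 (with equality only when i = k), b > 0, c < 0 and d ≥ 0 (with d > 0 whenever (i,k) ≠ (1,n)). Then for the full product W = A₁···Aₙ = [[a,b],[c,d]], setting p_k = b_k/d_k for the partial products W_k = A₁···A_k = [[a_k,b_k],[c_k,d_k]] (1 ≤ k ≤ n-1), one has 0 < p₁ < p₂ < ⋯ < p_{n-1}. -/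
/-- The associated matrix of a cross ratio. -/
def assocMat (t : ℝ) : Matrix (Fin 2) (Fin 2) ℝ := !![0, 1; -1, t]

/-- The word `A_i · A_{i+1} ⋯ A_k` of associated matrices. -/
def wordProd (x : ℕ → ℝ) (i k : ℕ) : Matrix (Fin 2) (Fin 2) ℝ :=
  ((List.range (k + 1 - i)).map (fun j => assocMat (x (i + j)))).prod

lemma det_wordProd (x : ℕ → ℝ) (i k : ℕ) : (wordProd x i k).det = 1 := by
  unfold wordProd
  generalize List.range (k + 1 - i) = l
  induction l with
  | nil => simp
  | cons a l ih =>
    rw [List.map_cons, List.prod_cons, Matrix.det_mul, ih, mul_one]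
    simp [assocMat, Matrix.det_fin_two_of]

lemma wordProd_succ (x : ℕ → ℝ) (k : ℕ) :
    wordProd x 1 (k + 1) = wordProd x 1 k * assocMat (x (k + 1)) := by
  unfold wordProd
  have h1 : k + 1 + 1 - 1 = k + 1 := rfl
  have h2 : k + 1 - 1 = k := rfl
  rw [h1, h2, List.range_succ, List.map_append, List.prod_append]
  simp [add_comm]

lemma mul_entries (W : Matrix (Fin 2) (Fin 2) ℝ) (t : ℝ) :
    (W * assocMat t) 0 1 = W 0 0 + W 0 1 * t ∧
    (W * assocMat t) 1 1 = W 1 0 + W 1 1 * t := by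
  constructor <;> simp [assocMat, Matrix.mul_apply, Fin.sum_univ_two]

theorem stmt_2 (n : ℕ) (x : ℕ → ℝ) (hn : 2 ≤ n)
    (hx : ∀ i, 1 ≤ i → i ≤ n → 0 < x i)
    (hadm : ∀ i k, 1 ≤ i → i ≤ k → k ≤ n →
      (wordProd x i k) 0 0 ≤ 0 ∧ ((wordProd x i k) 0 0 = 0 → i = k) ∧
      0 < (wordProd x i k) 0 1 ∧ (wordProd x i k) 1 0 < 0 ∧
      0 ≤ (wordProd x i k) 1 1 ∧ ((i, k) ≠ (1, n) → 0 < (wordProd x i k) 1 1)) :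
    (∀ k, 1 ≤ k → k ≤ n - 1 →
      0 < (wordProd x 1 k) 0 1 / (wordProd x 1 k) 1 1) ∧
    (∀ k, 1 ≤ k → k + 1 ≤ n - 1 →
      (wordProd x 1 k) 0 1 / (wordProd x 1 k) 1 1 <
        (wordProd x 1 (k + 1)) 0 1 / (wordProd x 1 (k + 1)) 1 1) := by
  have key : ∀ k, 1 ≤ k → k ≤ n - 1 →
      0 < (wordProd x 1 k) 0 1 ∧ 0 < (wordProd x 1 k) 1 1 := by
    intro k hk1 hk2
    obtain ⟨_, _, hb, _, _, hd⟩ := hadm 1 k le_rfl hk1 (by omega)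
    exact ⟨hb, hd (by simp only [ne_eq, Prod.mk.injEq]; omega)⟩
  constructor
  · intro k hk1 hk2
    obtain ⟨hb, hd⟩ := key k hk1 hk2
    exact div_pos hb hd
  · intro k hk1 hk2
    obtain ⟨hb, hd⟩ := key k hk1 (by omega)
    obtain ⟨hb', hd'⟩ := key (k + 1) (by omega) hk2
    have hdet : (wordProd x 1 k) 0 0 * (wordProd x 1 k) 1 1 -
        (wordProd x 1 k) 0 1 * (wordProd x 1 k) 1 0 = 1 := by
      rw [← Matrix.det_fin_two]; exact det_wordProd x 1 k
    obtain ⟨e1, e2⟩ := mul_entries (wordProd x 1 k) (x (k + 1))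
    rw [← wordProd_succ] at e1 e2
    rw [div_lt_div_iff₀ hd hd', e1, e2]
    nlinarith [hd'.le, hb.le]
end

section
/- Let A = [[a₁,a₂],[a₃,a₄]], B = [[b₁,b₂],[b₃,b₄]], C = [[c₁,c₂],[c₃,c₄]] be matrices in SL₂(ℝ) with aᵢ, bᵢ, cᵢ satisfying: first entries ≤ 0, second entries > 0, third entries < 0, fourth entries > 0 (for each matrix). If the (2,2) entry of AB equals the (2,2) entry of -C⁻¹, the (2,2) entry of BC equals the (2,2) entry of -A⁻¹, and the (2,2) entry of CA equals the (2,2) entry of -B⁻¹, then ABC = -I. -/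
theorem stmt_8 (a₁ a₂ a₃ a₄ b₁ b₂ b₃ b₄ c₁ c₂ c₃ c₄ : ℝ)
    (hdetA : a₁ * a₄ - a₂ * a₃ = 1) (hdetB : b₁ * b₄ - b₂ * b₃ = 1)
    (hdetC : c₁ * c₄ - c₂ * c₃ = 1)
    (ha₁ : a₁ ≤ 0) (ha₂ : 0 < a₂) (ha₃ : a₃ < 0) (ha₄ : 0 < a₄)
    (hb₁ : b₁ ≤ 0) (hb₂ : 0 < b₂) (hb₃ : b₃ < 0) (hb₄ : 0 < b₄)
    (hc₁ : c₁ ≤ 0) (hc₂ : 0 < c₂) (hc₃ : c₃ < 0) (hc₄ : 0 < c₄)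
    (A : Matrix (Fin 2) (Fin 2) ℝ) (B : Matrix (Fin 2) (Fin 2) ℝ)
    (C : Matrix (Fin 2) (Fin 2) ℝ)
    (hA : A = !![a₁, a₂; a₃, a₄]) (hB : B = !![b₁, b₂; b₃, b₄])
    (hC : C = !![c₁, c₂; c₃, c₄])
    -- the (2,2) entry of -C⁻¹ is -c₁, and similarly for A and B
    (hAB : (A * B) 1 1 = -c₁) (hBC : (B * C) 1 1 = -a₁) (hCA : (C * A) 1 1 = -b₁) :
    A * B * C = -1 := by
  subst hA hB hC
  simp [Matrix.mul_apply, Fin.sum_univ_succ] at hAB hBC hCA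
  -- hAB : a₃*b₂ + a₄*b₄ = -c₁ (up to arrangement)
  have hDD : (a₁*a₄ - a₂*a₃) * (b₁*b₄ - b₂*b₃) = 1 := by rw [hdetA, hdetB]; ring
  have hQ : a₂*b₃*(c₂*c₃) = (a₁ + b₄*c₄) * (b₁ + a₄*c₄) := by
    have h1 : b₃*c₂ = -a₁ - b₄*c₄ := by linarith
    have h2 : a₂*c₃ = -b₁ - a₄*c₄ := by linarith
    calc a₂*b₃*(c₂*c₃) = (b₃*c₂)*(a₂*c₃) := by ring
      _ = (-a₁ - b₄*c₄)*(-b₁ - a₄*c₄) := by rw [h1, h2]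
      _ = (a₁ + b₄*c₄) * (b₁ + a₄*c₄) := by ring
  have key : (c₄ + a₁*b₁ + a₂*b₃) * (a₄*b₄*c₄ + 1) = 0 := by
    linear_combination (-(a₂*b₃)) * hdetC - hQ
      + c₄*a₂*b₃*hAB + c₄*(hDD - hdetA - hdetB + b₂*b₃*hdetA + a₂*a₃*hdetB)
  have hpos : a₄*b₄*c₄ + 1 > 0 := by positivity
  have hc4 : c₄ = -(a₁*b₁ + a₂*b₃) := by
    have := mul_eq_zero.mp key
    rcases this with h | h
    · linarith
    · linarith
  have hb3 : b₃ ≠ 0 := ne_of_lt hb₃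
  have ha2 : a₂ ≠ 0 := ne_of_gt ha₂
  have hc2 : c₂ = a₁*b₂ + a₂*b₄ := by
    apply mul_left_cancel₀ hb3
    linear_combination hBC - b₄*hc4 + a₁*hdetB
  have hc3 : c₃ = a₃*b₁ + a₄*b₃ := by
    apply mul_left_cancel₀ ha2
    linear_combination hCA - a₄*hc4 + b₁*hdetA
  have hc1 : c₁ = -(a₃*b₂ + a₄*b₄) := by linarith
  subst hc1 hc2 hc3 hc4
  ext i j
  fin_cases i <;> fin_cases j <;>
    simp [Matrix.mul_apply, Fin.sum_univ_succ] <;>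
    first
    | linear_combination hDD
    | linear_combination -hDD
    | ring
end

section
/- Let x, y, z > 0 and X = [[0,1],[-1,x]], Y = [[0,1],[-1,y]], Z = [[0,1],[-1,z]]. Then (XYZ)² = -I if and only if xyz = x + y + z. -/
theorem stmt_11 (x y z : ℝ) (hx : 0 < x) (hy : 0 < y) (hz : 0 < z) :
    ((!![0, 1; -1, x] : Matrix (Fin 2) (Fin 2) ℝ) * !![0, 1; -1, y] *
        !![0, 1; -1, z]) ^ 2 = -1 ↔ x * y * z = x + y + z := by
  rw [pow_two, ← Matrix.ext_iff]
  simp only [Fin.forall_fin_two, Matrix.mul_apply, Fin.sum_univ_two, Matrix.neg_apply,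
    Matrix.one_apply, Matrix.cons_val', Matrix.cons_val_zero, Matrix.cons_val_one,
    Matrix.head_cons, Matrix.empty_val', Matrix.cons_val_fin_one, Matrix.head_fin_const,
    Matrix.one_apply_eq, Matrix.one_apply_ne]
  norm_num
  constructor
  · rintro ⟨⟨h1, h2⟩, h3, h4⟩
    nlinarith [h1, h2, h3, h4, sq_nonneg y, mul_pos hy hz]
  · intro h
    refine ⟨⟨by nlinarith, by nlinarith⟩, by nlinarith, by nlinarith⟩
end
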